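/- Let Φ be the MPP instance reduced from a 3SAT instance (X, C) with n variables and m clauses (as described in the context). Then Φ admits a solution with makespan at most m+2 if and only if (X, C) is satisfiable. -/

import Mathlib

/-!
Formalization of multi-robot path planning on graphs (MPP).

An MPP instance consists of a connected simple graph `G` on a vertex type `V`,
a finite set of robots (an index type `R`), and injective start/goal
configurations `xI xG : R → V`.  A scheduled path is a map `ℕ → V`.
-/

namespace MPPFormal

variable {V R : Type}

/-- The arrival time of a path `p` with goal `g`: the smallest time `t`
with `p t = g`. -/
noncomputable def arrivalTime (g : V) (p : ℕ → V) : ℕ := sInf {t | p t = g}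

/-- A feasible scheduled path from `s` to `g` in the graph `G`:
it starts at `s`, reaches `g` at some time, stays at `g` forever after the
first time it reaches `g`, and at every time step it either traverses an
edge of `G` or stays put. -/
def FeasiblePath (G : SimpleGraph V) (s g : V) (p : ℕ → V) : Prop :=
  p 0 = s ∧ (∃ t, p t = g) ∧ (∀ t, arrivalTime g p ≤ t → p t = g) ∧
    ∀ t, G.Adj (p t) (p (t + 1)) ∨ p t = p (t + 1)

/-- Two scheduled paths collide if they meet at the same vertex at the same
time, or if they swap along an edge head-on. -/
def Collide (p q : ℕ → V) : Prop :=
  (∃ t, p t = q t) ∨ ∃ t, p t = q (t + 1) ∧ p (t + 1) = q t ∧ p t ≠ p (t + 1)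

/-- The length of a scheduled path: the number of time steps at which it
actually moves. -/
noncomputable def pathLen (p : ℕ → V) : ℕ := Set.ncard {t | p t ≠ p (t + 1)}

/-- A solution to the MPP instance `(G, R, xI, xG)`: a family of pairwise
non-colliding feasible paths, one per robot. -/
def IsSolution (G : SimpleGraph V) (xI xG : R → V) (p : R → ℕ → V) : Prop :=
  (∀ i, FeasiblePath G (xI i) (xG i) (p i)) ∧
    Pairwise fun i j => ¬ Collide (p i) (p j)

/-- `(G, xI, xG)` together with the robot index type `R` forms an MPP
instance: the graph is connected and the start and goal configurations are
injective. -/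
def IsMPPInstance (G : SimpleGraph V) (xI xG : R → V) : Prop :=
  G.Connected ∧ Function.Injective xI ∧ Function.Injective xG

variable [Fintype R]

/-- Total arrival time of a solution. -/
noncomputable def totalTime (xG : R → V) (p : R → ℕ → V) : ℕ :=
  ∑ i, arrivalTime (xG i) (p i)

/-- Makespan (last arrival time) of a solution. -/
noncomputable def makespan (xG : R → V) (p : R → ℕ → V) : ℕ :=
  Finset.univ.sup fun i => arrivalTime (xG i) (p i)

/-- Total distance traveled in a solution. -/
noncomputable def totalDist (p : R → ℕ → V) : ℕ := ∑ i, pathLen (p i)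

/-- Maximum single-robot distance of a solution. -/
noncomputable def maxDist (p : R → ℕ → V) : ℕ :=
  Finset.univ.sup fun i => pathLen (p i)

/-- Minimum total arrival time over all solutions. -/
noncomputable def minTotalTime (G : SimpleGraph V) (xI xG : R → V) : ℕ :=
  sInf {c | ∃ p, IsSolution G xI xG p ∧ totalTime xG p = c}

/-- Minimum makespan over all solutions. -/
noncomputable def minMakespan (G : SimpleGraph V) (xI xG : R → V) : ℕ :=
  sInf {c | ∃ p, IsSolution G xI xG p ∧ makespan xG p = c}

/-- Minimum total distance over all solutions. -/
noncomputable def minTotalDist (G : SimpleGraph V) (xI xG : R → V) : ℕ :=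
  sInf {c | ∃ p, IsSolution G xI xG p ∧ totalDist p = c}

/-- Minimum maximum distance over all solutions. -/
noncomputable def minMaxDist (G : SimpleGraph V) (xI xG : R → V) : ℕ :=
  sInf {c | ∃ p, IsSolution G xI xG p ∧ maxDist p = c}

end MPPFormal

/-!
The reduction from 3SAT to MPP.

A 3SAT instance over `n` variables with `m` clauses assigns to each clause
`j : Fin m` three literals; a literal is a pair `(i, b) : Fin n × Bool`,
`b = true` meaning the non-negated variable `x_i` and `b = false` the
negated literal `¬ x_i`.  The three literals of each clause involve three
distinct variables.
-/

namespace MPPFormal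

/-- A 3SAT instance with variables `x_1, …, x_n` and clauses `c_1, …, c_m`. -/
structure ThreeSat (n m : ℕ) where
  lit : Fin m → Fin 3 → Fin n × Bool
  distinctVars : ∀ j (k k' : Fin 3), k ≠ k' → (lit j k).1 ≠ (lit j k').1

/-- An assignment `a` satisfies the instance if every clause contains a true
literal. -/
def ThreeSat.SatisfiedBy {n m : ℕ} (sat : ThreeSat n m) (a : Fin n → Bool) : Prop :=
  ∀ j, ∃ k, a (sat.lit j k).1 = (sat.lit j k).2

/-- Satisfiability of a 3SAT instance. -/
def ThreeSat.Satisfiable {n m : ℕ} (sat : ThreeSat n m) : Prop :=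
  ∃ a, sat.SatisfiedBy a

/-- Vertices of the MPP instance `Φ` reduced from a 3SAT instance with `n`
variables and `m` clauses:
* `vx i` is the left endpoint `v_{x_i}` of the `i`-th variable strip (start of
  the variable robot `r_{x_i}`);
* `vxg i` is the right endpoint `v_{x_i}^g` (goal of `r_{x_i}`);
* `mid i side k` is the interior vertex of the `i`-th upper (`side = true`)
  or lower (`side = false`) path lying at distance `k + 1` from `vx i`
  (each of the two paths has length `m + 2`, hence `m + 1` interior
  vertices, `k : Fin (m+1)`);
* `vc j` is the start vertex `v_{c_j}` of the clause robot `r_{c_j}`;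
* `vcg j` is its goal vertex `v_{c_j}^g`. -/
inductive PhiV (n m : ℕ) where
  | vx (i : Fin n)
  | vxg (i : Fin n)
  | mid (i : Fin n) (side : Bool) (k : Fin (m + 1))
  | vc (j : Fin m)
  | vcg (j : Fin m)
deriving DecidableEq

/-- Base relation generating the edges of `Φ`:
the two length-`(m+2)` paths of each variable strip; an edge from `v_{c_j}`
to the vertex at distance `j + 1` (`1`-indexed: distance `j`) from `v_{x_i}`
on the upper (resp. lower) path of `x_i` for each non-negated (resp. negated)
literal of `c_j`; the path `v_{c_1}^g - ⋯ - v_{c_m}^g`; and edges from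
`v_{c_m}^g` to every `v_{x_i}`. -/
def phiRel {n m : ℕ} (sat : ThreeSat n m) : PhiV n m → PhiV n m → Prop
  | PhiV.vx i, PhiV.mid i' _ k => i = i' ∧ (k : ℕ) = 0
  | PhiV.mid i s k, PhiV.mid i' s' k' => i = i' ∧ s = s' ∧ (k' : ℕ) = (k : ℕ) + 1
  | PhiV.mid i _ k, PhiV.vxg i' => i = i' ∧ (k : ℕ) = m
  | PhiV.vc j, PhiV.mid i s k => (∃ l, sat.lit j l = (i, s)) ∧ (k : ℕ) = (j : ℕ)
  | PhiV.vcg j, PhiV.vcg j' => (j' : ℕ) = (j : ℕ) + 1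
  | PhiV.vcg j, PhiV.vx _ => (j : ℕ) + 1 = m
  | _, _ => False

/-- The graph of the reduced MPP instance `Φ`. -/
def phiGraph {n m : ℕ} (sat : ThreeSat n m) : SimpleGraph (PhiV n m) :=
  SimpleGraph.fromRel (phiRel sat)

/-- Start configuration of `Φ`: the variable robot `r_{x_i}` (index
`Sum.inl i`) starts at `v_{x_i}`; the clause robot `r_{c_j}` (index
`Sum.inr j`) starts at `v_{c_j}`. -/
def phiStart {n m : ℕ} : Fin n ⊕ Fin m → PhiV n m :=
  Sum.elim PhiV.vx PhiV.vc

/-- Goal configuration of `Φ`: `r_{x_i}` must reach `v_{x_i}^g` and `r_{c_j}`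
must reach `v_{c_j}^g`. -/
def phiGoal {n m : ℕ} : Fin n ⊕ Fin m → PhiV n m :=
  Sum.elim PhiV.vxg PhiV.vcg

end MPPFormal

namespace MPPFormal

section Aux
variable {n m : ℕ}

lemma phi_adj_iff (sat : ThreeSat n m) {u v : PhiV n m} :
    (phiGraph sat).Adj u v ↔ u ≠ v ∧ (phiRel sat u v ∨ phiRel sat v u) := by
  simp [phiGraph, SimpleGraph.fromRel_adj]

/-- Potential for the variable robot `i`. -/
def phiVar (i : Fin n) : PhiV n m → ℕ
  | .vx i' => if i' = i then m+2 else m+4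
  | .vxg i' => if i' = i then 0 else 2
  | .mid i' _ k => if i' = i then m+1-(k:ℕ) else m+3-(k:ℕ)
  | .vc j' => m+2-(j':ℕ)
  | .vcg _ => m+3

/-- Potential for the clause robot `j`. -/
def psiC (j : Fin m) : PhiV n m → ℕ
  | .vx _ => m - (j:ℕ)
  | .vxg _ => m+2+(m-(j:ℕ))
  | .mid _ _ k => (k:ℕ)+1+(m-(j:ℕ))
  | .vc j' => (j':ℕ)+2+(m-(j:ℕ))
  | .vcg j' => (j':ℕ) - (j:ℕ) + ((j:ℕ) - (j':ℕ))

lemma phiVar_rel (sat : ThreeSat n m) (i : Fin n) {u v : PhiV n m}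
    (h : phiRel sat u v) :
    phiVar i u ≤ phiVar i v + 1 ∧ phiVar i v ≤ phiVar i u + 1 := by
  cases u with
  | vx i' => cases v with
    | mid i2 s k =>
        obtain ⟨rfl, hk⟩ := h
        have := k.isLt
        simp only [phiVar]; split_ifs <;> omega
    | vx _ => exact h.elim
    | vxg _ => exact h.elim
    | vc _ => exact h.elim
    | vcg _ => exact h.elim
  | vxg i' => cases v <;> exact h.elim
  | mid i1 s k => cases v with
    | mid i2 s2 k2 =>
        obtain ⟨rfl, rfl, hk⟩ := h
        have := k.isLt; have := k2.isLt
        simp only [phiVar]; split_ifs <;> omega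
    | vxg i2 =>
        obtain ⟨rfl, hk⟩ := h
        have := k.isLt
        simp only [phiVar]; split_ifs <;> omega
    | vx _ => exact h.elim
    | vc _ => exact h.elim
    | vcg _ => exact h.elim
  | vc j1 => cases v with
    | mid i2 s2 k2 =>
        obtain ⟨-, hk⟩ := h
        have := j1.isLt; have := k2.isLt
        simp only [phiVar]; split_ifs <;> omega
    | vx _ => exact h.elim
    | vxg _ => exact h.elim
    | vc _ => exact h.elim
    | vcg _ => exact h.elim
  | vcg j1 => cases v with
    | vcg j2 =>
        have := j1.isLt; have := j2.isLt
        simp only [phiVar]; omega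
    | vx i2 =>
        have := j1.isLt
        simp only [phiVar]; split_ifs <;> omega
    | vxg _ => exact h.elim
    | mid _ _ _ => exact h.elim
    | vc _ => exact h.elim

lemma psiC_rel (sat : ThreeSat n m) (j : Fin m) {u v : PhiV n m}
    (h : phiRel sat u v) :
    psiC j u ≤ psiC j v + 1 ∧ psiC j v ≤ psiC j u + 1 := by
  have hj := j.isLt
  cases u with
  | vx i' => cases v with
    | mid i2 s k =>
        obtain ⟨-, hk⟩ := h
        have := k.isLt; simp only [psiC]; omega
    | vx _ => exact h.elim
    | vxg _ => exact h.elim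
    | vc _ => exact h.elim
    | vcg _ => exact h.elim
  | vxg i' => cases v <;> exact h.elim
  | mid i1 s k => cases v with
    | mid i2 s2 k2 =>
        obtain ⟨rfl, rfl, hk⟩ := h
        have := k.isLt; have := k2.isLt
        simp only [psiC]; omega
    | vxg i2 =>
        obtain ⟨rfl, hk⟩ := h
        have := k.isLt
        simp only [psiC]; omega
    | vx _ => exact h.elim
    | vc _ => exact h.elim
    | vcg _ => exact h.elim
  | vc j1 => cases v with
    | mid i2 s2 k2 =>
        obtain ⟨-, hk⟩ := h
        have := j1.isLt; have := k2.isLt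
        simp only [psiC]; omega
    | vx _ => exact h.elim
    | vxg _ => exact h.elim
    | vc _ => exact h.elim
    | vcg _ => exact h.elim
  | vcg j1 => cases v with
    | vcg j2 =>
        have := j1.isLt; have := j2.isLt
        simp only [psiC]
        have : (j2:ℕ) = (j1:ℕ) + 1 := h
        omega
    | vx i2 =>
        have := j1.isLt
        have : (j1:ℕ) + 1 = m := h
        simp only [psiC]; omega
    | vxg _ => exact h.elim
    | mid _ _ _ => exact h.elim
    | vc _ => exact h.elim

lemma pot_step (sat : ThreeSat n m) (φ : PhiV n m → ℕ)
    (hφ : ∀ u v, phiRel sat u v → φ u ≤ φ v + 1 ∧ φ v ≤ φ u + 1)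
    {u v : PhiV n m} (h : (phiGraph sat).Adj u v) : φ u ≤ φ v + 1 := by
  rw [phi_adj_iff] at h
  rcases h.2 with h' | h'
  · exact (hφ _ _ h').1
  · exact (hφ _ _ h').2

lemma pot_traj (sat : ThreeSat n m) (φ : PhiV n m → ℕ)
    (hφ : ∀ u v, phiRel sat u v → φ u ≤ φ v + 1 ∧ φ v ≤ φ u + 1)
    (p : ℕ → PhiV n m)
    (hp : ∀ t, (phiGraph sat).Adj (p t) (p (t+1)) ∨ p t = p (t+1)) :
    ∀ t s, φ (p t) ≤ φ (p (t+s)) + s ∧ φ (p (t+s)) ≤ φ (p t) + s := by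
  intro t s
  induction s with
  | zero => simp
  | succ s ih =>
      rcases hp (t+s) with h | h
      · have h1 := pot_step sat φ hφ h
        have h2 := pot_step sat φ hφ h.symm
        constructor <;> [skip; skip] <;>
          · rw [show t + (s+1) = (t+s)+1 by ring]
            omega
      · rw [show t + (s+1) = (t+s)+1 by ring, ← h]
        omega

lemma pot_exact (sat : ThreeSat n m) (φ : PhiV n m → ℕ)
    (hφ : ∀ u v, phiRel sat u v → φ u ≤ φ v + 1 ∧ φ v ≤ φ u + 1)
    (p : ℕ → PhiV n m)
    (hp : ∀ t, (phiGraph sat).Adj (p t) (p (t+1)) ∨ p t = p (t+1))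
    (T : ℕ) (h0 : φ (p 0) = T) (hT : φ (p T) = 0) :
    ∀ t, t ≤ T → φ (p t) + t = T := by
  intro t ht
  have h1 := (pot_traj sat φ hφ p hp 0 t).1
  have h2 := (pot_traj sat φ hφ p hp t (T - t)).1
  rw [show t + (T - t) = T by omega] at h2
  simp at h1
  omega

lemma pot_adj (sat : ThreeSat n m) (φ : PhiV n m → ℕ)
    (hφ : ∀ u v, phiRel sat u v → φ u ≤ φ v + 1 ∧ φ v ≤ φ u + 1)
    (p : ℕ → PhiV n m)
    (hp : ∀ t, (phiGraph sat).Adj (p t) (p (t+1)) ∨ p t = p (t+1))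
    (T : ℕ) (h0 : φ (p 0) = T) (hT : φ (p T) = 0)
    {t : ℕ} (ht : t < T) : (phiGraph sat).Adj (p t) (p (t+1)) := by
  rcases hp t with h | h
  · exact h
  · exfalso
    have e1 := pot_exact sat φ hφ p hp T h0 hT t (le_of_lt ht)
    have e2 := pot_exact sat φ hφ p hp T h0 hT (t+1) ht
    rw [← h] at e2
    omega

end Aux
end MPPFormal
namespace MPPFormal
section Aux2
variable {n m : ℕ} (sat : ThreeSat n m)

lemma varStep0 (i : Fin n) {v : PhiV n m}
    (hadj : (phiGraph sat).Adj (PhiV.vx i) v)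
    (hval : phiVar i v + 1 = m + 2) :
    ∃ (s : Bool) (k : Fin (m+1)), (k:ℕ) = 0 ∧ v = PhiV.mid i s k := by
  rcases (phi_adj_iff sat).1 hadj with ⟨hne, hrel⟩
  cases v with
  | vx i2 => simp [phiRel] at hrel
  | vxg i2 => simp [phiRel] at hrel
  | mid i2 s k =>
      simp only [phiRel] at hrel
      rcases hrel with ⟨rfl, hk⟩ | h
      · exact ⟨s, k, hk, rfl⟩
      · exact h.elim
  | vc j2 => simp [phiRel] at hrel
  | vcg j2 =>
      simp only [phiVar] at hval; omega

lemma varStepMid (i : Fin n) (s : Bool) (k : Fin (m+1)) {v : PhiV n m}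
    (hadj : (phiGraph sat).Adj (PhiV.mid i s k) v)
    (hval : phiVar i v + ((k:ℕ) + 2) = m + 2) :
    (∃ k' : Fin (m+1), (k':ℕ) = (k:ℕ) + 1 ∧ v = PhiV.mid i s k') ∨
      ((k:ℕ) = m ∧ v = PhiV.vxg i) := by
  rcases (phi_adj_iff sat).1 hadj with ⟨hne, hrel⟩
  have hk := k.isLt
  cases v with
  | vx i2 =>
      simp only [phiRel] at hrel
      rcases hrel with h | ⟨rfl, hk0⟩
      · exact h.elim
      · simp [phiVar] at hval <;> omega
  | vxg i2 =>
      simp only [phiRel] at hrel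
      rcases hrel with ⟨rfl, hkm⟩ | h
      · exact Or.inr ⟨hkm, rfl⟩
      · exact h.elim
  | mid i2 s2 k2 =>
      have hk2 := k2.isLt
      simp only [phiRel] at hrel
      rcases hrel with ⟨rfl, rfl, hke⟩ | ⟨rfl, rfl, hke⟩
      · exact Or.inl ⟨k2, hke, rfl⟩
      · simp [phiVar] at hval <;> omega
  | vc j2 =>
      simp only [phiRel] at hrel
      rcases hrel with h | ⟨hl, hke⟩
      · exact h.elim
      · have := j2.isLt
        simp only [phiVar] at hval; omega
  | vcg j2 =>
      simp [phiRel] at hrel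

lemma clauseStep0 (j : Fin m) {v : PhiV n m}
    (hadj : (phiGraph sat).Adj (PhiV.vc j) v) :
    ∃ (i : Fin n) (s : Bool) (k : Fin (m+1)),
      (∃ l, sat.lit j l = (i, s)) ∧ (k:ℕ) = (j:ℕ) ∧ v = PhiV.mid i s k := by
  rcases (phi_adj_iff sat).1 hadj with ⟨hne, hrel⟩
  cases v with
  | vx i2 => simp [phiRel] at hrel
  | vxg i2 => simp [phiRel] at hrel
  | mid i2 s k =>
      simp only [phiRel] at hrel
      rcases hrel with ⟨hl, hk⟩ | h
      · exact ⟨i2, s, k, hl, hk, rfl⟩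
      · exact h.elim
  | vc j2 => simp [phiRel] at hrel
  | vcg j2 => simp [phiRel] at hrel

lemma clauseStepMid (j : Fin m) (i : Fin n) (s : Bool) (k : Fin (m+1))
    {v : PhiV n m}
    (hadj : (phiGraph sat).Adj (PhiV.mid i s k) v)
    (hval : psiC j v + 1 = (k:ℕ) + 1 + (m - (j:ℕ)))
    (hk1 : 1 ≤ (k:ℕ)) :
    ∃ k' : Fin (m+1), (k':ℕ) + 1 = (k:ℕ) ∧ v = PhiV.mid i s k' := by
  rcases (phi_adj_iff sat).1 hadj with ⟨hne, hrel⟩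
  have hk := k.isLt
  have hj := j.isLt
  cases v with
  | vx i2 =>
      simp only [phiRel] at hrel
      rcases hrel with h | ⟨rfl, hk0⟩
      · exact h.elim
      · omega
  | vxg i2 =>
      simp only [psiC] at hval; omega
  | mid i2 s2 k2 =>
      have hk2 := k2.isLt
      simp only [phiRel] at hrel
      simp only [psiC] at hval
      rcases hrel with ⟨rfl, rfl, hke⟩ | ⟨rfl, rfl, hke⟩
      · omega
      · exact ⟨k2, by omega, rfl⟩
  | vc j2 =>
      have := j2.isLt
      simp only [phiRel] at hrel
      rcases hrel with h | ⟨-, hke⟩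
      · exact h.elim
      · simp only [psiC] at hval; omega
  | vcg j2 =>
      simp [phiRel] at hrel

end Aux2
end MPPFormal
namespace MPPFormal
section Aux3
variable {n m : ℕ}

lemma backward_dir (hm : 0 < m) (sat : ThreeSat n m)
    (p : Fin n ⊕ Fin m → ℕ → PhiV n m)
    (hsol : IsSolution (phiGraph sat) phiStart phiGoal p)
    (hmk : makespan phiGoal p ≤ m + 2) : sat.Satisfiable := by
  classical
  obtain ⟨hfeas, hcol⟩ := hsol
  have hend : ∀ r, p r (m+2) = phiGoal r := by
    intro r
    have h1 : arrivalTime (phiGoal r) (p r) ≤ m + 2 :=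
      le_trans (Finset.le_sup (f := fun r => arrivalTime (phiGoal r) (p r))
        (Finset.mem_univ r)) hmk
    exact (hfeas r).2.2.1 _ h1
  -- variable robot trajectories
  have varTraj : ∀ i : Fin n, ∃ s : Bool, ∀ t, 1 ≤ t → t ≤ m+1 →
      ∃ k : Fin (m+1), (k:ℕ) = t - 1 ∧ p (Sum.inl i) t = PhiV.mid i s k := by
    intro i
    set q := p (Sum.inl i) with hq
    have hmove : ∀ t, (phiGraph sat).Adj (q t) (q (t+1)) ∨ q t = q (t+1) :=
      (hfeas (Sum.inl i)).2.2.2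
    have h0 : q 0 = PhiV.vx i := (hfeas (Sum.inl i)).1
    have hT : q (m+2) = PhiV.vxg i := hend (Sum.inl i)
    have h0' : phiVar i (q 0) = m + 2 := by rw [h0]; simp [phiVar]
    have hT' : phiVar i (q (m+2)) = 0 := by rw [hT]; simp [phiVar]
    have hexact := pot_exact sat (phiVar i) (fun u v h => phiVar_rel sat i h) q hmove (m+2) h0' hT'
    have hadj : ∀ t, t < m + 2 → (phiGraph sat).Adj (q t) (q (t+1)) :=
      fun t ht => pot_adj sat (phiVar i) (fun u v h => phiVar_rel sat i h) q hmove (m+2) h0' hT' ht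
    have hadj0 := hadj 0 (by omega)
    rw [h0] at hadj0
    obtain ⟨s, k0, hk0, hq1⟩ := varStep0 sat i hadj0 (hexact 1 (by omega))
    refine ⟨s, ?_⟩
    intro t h1t
    induction t, h1t using Nat.le_induction with
    | base => exact fun _ => ⟨k0, by omega, hq1⟩
    | succ t h1t ih =>
        intro htm
        obtain ⟨k, hk, hqt⟩ := ih (by omega)
        have hadjt := hadj t (by omega)
        rw [hqt] at hadjt
        have hval : phiVar i (q (t+1)) + ((k:ℕ) + 2) = m + 2 := by
          have := hexact (t+1) (by omega); omega
        rcases varStepMid sat i s k hadjt hval with ⟨k', hk', hq'⟩ | ⟨hkm, _⟩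
        · exact ⟨k', by omega, hq'⟩
        · omega
  -- clause robot trajectories
  have clTraj : ∀ j : Fin m, ∃ (i : Fin n) (s : Bool),
      (∃ l, sat.lit j l = (i, s)) ∧ ∀ t, 1 ≤ t → t ≤ (j:ℕ)+1 →
      ∃ k : Fin (m+1), (k:ℕ) = (j:ℕ)+1-t ∧ p (Sum.inr j) t = PhiV.mid i s k := by
    intro j
    have hjm := j.isLt
    set q := p (Sum.inr j) with hq
    have hmove : ∀ t, (phiGraph sat).Adj (q t) (q (t+1)) ∨ q t = q (t+1) :=
      (hfeas (Sum.inr j)).2.2.2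
    have h0 : q 0 = PhiV.vc j := (hfeas (Sum.inr j)).1
    have hT : q (m+2) = PhiV.vcg j := hend (Sum.inr j)
    have h0' : psiC j (q 0) = m + 2 := by rw [h0]; simp [psiC]; omega
    have hT' : psiC j (q (m+2)) = 0 := by rw [hT]; simp only [psiC]; omega
    have hexact := pot_exact sat (psiC j) (fun u v h => psiC_rel sat j h) q hmove (m+2) h0' hT'
    have hadj : ∀ t, t < m + 2 → (phiGraph sat).Adj (q t) (q (t+1)) :=
      fun t ht => pot_adj sat (psiC j) (fun u v h => psiC_rel sat j h) q hmove (m+2) h0' hT' ht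
    have hadj0 := hadj 0 (by omega)
    rw [h0] at hadj0
    obtain ⟨i, s, k0, hl, hk0, hq1⟩ := clauseStep0 sat j hadj0
    refine ⟨i, s, hl, ?_⟩
    intro t h1t
    induction t, h1t using Nat.le_induction with
    | base => exact fun _ => ⟨k0, by omega, hq1⟩
    | succ t h1t ih =>
        intro htj
        obtain ⟨k, hk, hqt⟩ := ih (by omega)
        have hadjt := hadj t (by omega)
        rw [hqt] at hadjt
        have hval : psiC j (q (t+1)) + 1 = (k:ℕ) + 1 + (m - (j:ℕ)) := by
          have := hexact (t+1) (by omega); omega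
        obtain ⟨k', hk', hq'⟩ := clauseStepMid sat j i s k hadjt hval (by omega)
        exact ⟨k', by omega, hq'⟩
  choose S hS using varTraj
  choose I Sc hlit hcl using clTraj
  refine ⟨fun i => ! S i, fun j => ?_⟩
  obtain ⟨l, hl⟩ := hlit j
  have hjm := (j : Fin m).isLt
  have hne : Sc j ≠ S (I j) := by
    intro hSc
    have hncol : ¬ Collide (p (Sum.inl (I j))) (p (Sum.inr j)) :=
      hcol (by simp : (Sum.inl (I j) : Fin n ⊕ Fin m) ≠ Sum.inr j)
    rcases Nat.even_or_odd (j:ℕ) with ⟨d, hd⟩ | ⟨d, hd⟩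
    · -- vertex collision at t = d+1
      obtain ⟨k1, hk1, e1⟩ := hS (I j) (d+1) (by omega) (by omega)
      obtain ⟨k2, hk2, e2⟩ := hcl j (d+1) (by omega) (by omega)
      refine hncol (Or.inl ⟨d+1, ?_⟩)
      rw [e1, e2, hSc]
      congr 1
      exact Fin.ext (by omega)
    · -- swap collision at t = d+1
      obtain ⟨k1, hk1, e1⟩ := hS (I j) (d+1) (by omega) (by omega)
      obtain ⟨k1', hk1', e1'⟩ := hS (I j) (d+2) (by omega) (by omega)
      obtain ⟨k2, hk2, e2⟩ := hcl j (d+1) (by omega) (by omega)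
      obtain ⟨k2', hk2', e2'⟩ := hcl j (d+2) (by omega) (by omega)
      refine hncol (Or.inr ⟨d+1, ?_, ?_, ?_⟩)
      · rw [e1, e2', hSc]; congr 1; exact Fin.ext (by omega)
      · rw [e1', e2, hSc]; congr 1; exact Fin.ext (by omega)
      · rw [e1, e1']
        intro hEq
        rw [PhiV.mid.injEq] at hEq
        have : (k1:ℕ) = (k1':ℕ) := congrArg Fin.val hEq.2.2
        omega
  refine ⟨l, ?_⟩
  rw [hl]
  cases hSc : Sc j <;> cases hSI : S (I j) <;> simp_all

end Aux3
end MPPFormal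
namespace MPPFormal
section Aux4
variable {n m : ℕ}

/-- Scheduled path of the variable robot `i` under assignment `a`. -/
def varPath (a : Fin n → Bool) (i : Fin n) (t : ℕ) : PhiV n m :=
  if t = 0 then .vx i
  else if h2 : t ≤ m + 1 then .mid i (! a i) ⟨t-1, by omega⟩
  else .vxg i

/-- Scheduled path of the clause robot `j`, entering the strip of variable
`i` on side `s`. -/
def clPath (j : Fin m) (i : Fin n) (s : Bool) (t : ℕ) : PhiV n m :=
  if t = 0 then .vc j
  else if h2 : t ≤ (j:ℕ) + 1 then .mid i s ⟨(j:ℕ)+1-t, by have := j.isLt; omega⟩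
  else if h3 : t = (j:ℕ) + 2 then .vx i
  else if h4 : t ≤ m + 2 then .vcg ⟨m+(j:ℕ)+2-t, by have := j.isLt; omega⟩
  else .vcg j

section adj
variable (sat : ThreeSat n m)

lemma adj_vx_mid (i : Fin n) (s : Bool) (k : Fin (m+1)) (hk : (k:ℕ) = 0) :
    (phiGraph sat).Adj (.vx i) (.mid i s k) := by
  rw [phi_adj_iff]
  exact ⟨by simp, Or.inl ⟨rfl, hk⟩⟩

lemma adj_mid_mid (i : Fin n) (s : Bool) (k k' : Fin (m+1))
    (h : (k':ℕ) = (k:ℕ) + 1) :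
    (phiGraph sat).Adj (.mid i s k) (.mid i s k') := by
  rw [phi_adj_iff]
  refine ⟨?_, Or.inl ⟨rfl, rfl, h⟩⟩
  intro hEq
  rw [PhiV.mid.injEq] at hEq
  have := congrArg Fin.val hEq.2.2
  omega

lemma adj_mid_vxg (i : Fin n) (s : Bool) (k : Fin (m+1)) (hk : (k:ℕ) = m) :
    (phiGraph sat).Adj (.mid i s k) (.vxg i) := by
  rw [phi_adj_iff]
  exact ⟨by simp, Or.inl ⟨rfl, hk⟩⟩

lemma adj_vc_mid (j : Fin m) (i : Fin n) (s : Bool) (k : Fin (m+1))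
    (hl : ∃ l, sat.lit j l = (i, s)) (hk : (k:ℕ) = (j:ℕ)) :
    (phiGraph sat).Adj (.vc j) (.mid i s k) := by
  rw [phi_adj_iff]
  exact ⟨by simp, Or.inl ⟨hl, hk⟩⟩

lemma adj_vcg_vcg (j j' : Fin m) (h : (j':ℕ) = (j:ℕ) + 1) :
    (phiGraph sat).Adj (.vcg j) (.vcg j') := by
  rw [phi_adj_iff]
  refine ⟨?_, Or.inl h⟩
  intro hEq
  rw [PhiV.vcg.injEq] at hEq
  have := congrArg Fin.val hEq
  omega

lemma adj_vcg_vx (j : Fin m) (i : Fin n) (h : (j:ℕ) + 1 = m) :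
    (phiGraph sat).Adj (.vcg j) (.vx i) := by
  rw [phi_adj_iff]
  exact ⟨by simp, Or.inl h⟩

end adj

lemma varPath_zero (a : Fin n → Bool) (i : Fin n) :
    varPath (m := m) a i 0 = .vx i := by simp [varPath]

lemma varPath_mid (a : Fin n → Bool) (i : Fin n) {t : ℕ}
    (h1 : 1 ≤ t) (h2 : t ≤ m + 1) :
    ∃ k : Fin (m+1), (k:ℕ) = t - 1 ∧ varPath a i t = .mid i (! a i) k := by
  unfold varPath
  split_ifs <;> first | exact ⟨_, rfl, rfl⟩ | omega

lemma varPath_end (a : Fin n → Bool) (i : Fin n) {t : ℕ} (h : m + 2 ≤ t) :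
    varPath (m := m) a i t = .vxg i := by
  unfold varPath
  split_ifs <;> first | rfl | omega

lemma varPath_eq_vxg (a : Fin n → Bool) (i : Fin n) (t : ℕ) :
    varPath (m := m) a i t = .vxg i ↔ m + 2 ≤ t := by
  unfold varPath
  split_ifs <;> simp <;> omega

lemma clPath_zero (j : Fin m) (i : Fin n) (s : Bool) :
    clPath j i s 0 = .vc j := by simp [clPath]

lemma clPath_mid (j : Fin m) (i : Fin n) (s : Bool) {t : ℕ}
    (h1 : 1 ≤ t) (h2 : t ≤ (j:ℕ) + 1) :
    ∃ k : Fin (m+1), (k:ℕ) = (j:ℕ) + 1 - t ∧ clPath j i s t = .mid i s k := by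
  unfold clPath
  split_ifs <;> first | exact ⟨_, rfl, rfl⟩ | omega

lemma clPath_vx (j : Fin m) (i : Fin n) (s : Bool) :
    clPath j i s ((j:ℕ) + 2) = .vx i := by
  have := j.isLt
  unfold clPath
  rw [if_neg (by omega : ¬ (j:ℕ)+2 = 0), dif_neg (by omega : ¬ (j:ℕ)+2 ≤ (j:ℕ)+1),
    dif_pos rfl]

lemma clPath_vcg (j : Fin m) (i : Fin n) (s : Bool) {t : ℕ}
    (h1 : (j:ℕ) + 3 ≤ t) (h2 : t ≤ m + 2) :
    ∃ jj : Fin m, (jj:ℕ) = m + (j:ℕ) + 2 - t ∧ clPath j i s t = .vcg jj := by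
  unfold clPath
  split_ifs <;> first | exact ⟨_, rfl, rfl⟩ | omega

lemma clPath_end (j : Fin m) (i : Fin n) (s : Bool) {t : ℕ} (h : m + 2 ≤ t) :
    clPath j i s t = .vcg j := by
  have := j.isLt
  unfold clPath
  rw [if_neg (by omega : ¬ t = 0), dif_neg (by omega : ¬ t ≤ (j:ℕ)+1),
    dif_neg (by omega : ¬ t = (j:ℕ)+2)]
  split_ifs with g4
  · congr 1
    exact Fin.ext (show m + (j:ℕ) + 2 - t = (j:ℕ) by omega)
  · rfl

lemma clPath_eq_vcg (j : Fin m) (i : Fin n) (s : Bool) (t : ℕ) :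
    clPath j i s t = .vcg j ↔ m + 2 ≤ t := by
  have := j.isLt
  constructor
  · intro h
    by_contra hlt
    rcases Nat.eq_zero_or_pos t with rfl | ht1
    · rw [clPath_zero] at h; cases h
    rcases le_or_gt t ((j:ℕ)+1) with h2 | h2
    · obtain ⟨k, hk, e⟩ := clPath_mid j i s ht1 h2
      rw [e] at h; cases h
    rcases eq_or_ne t ((j:ℕ)+2) with rfl | h3
    · rw [clPath_vx] at h; cases h
    obtain ⟨jj, hjj, e⟩ := clPath_vcg j i s (t := t) (by omega) (by omega)
    rw [e] at h
    rw [PhiV.vcg.injEq] at h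
    have := congrArg Fin.val h
    omega
  · exact clPath_end j i s

end Aux4
end MPPFormal
namespace MPPFormal
section Aux5
variable {n m : ℕ}

lemma collide_symm {V : Type} {p q : ℕ → V} (h : Collide p q) : Collide q p := by
  rcases h with ⟨t, h⟩ | ⟨t, h1, h2, h3⟩
  · exact Or.inl ⟨t, h.symm⟩
  · refine Or.inr ⟨t, h2.symm, h1.symm, ?_⟩
    intro hq
    exact h3 ((h1.trans hq.symm).trans h2.symm)

lemma var_var_ne (a : Fin n → Bool) {i i' : Fin n} (hne : i ≠ i') (t t' : ℕ) :
    varPath (m := m) a i t ≠ varPath a i' t' := by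
  unfold varPath
  split_ifs <;> simp [hne]

lemma var_cl_meet (a : Fin n → Bool) (i ij : Fin n) (j : Fin m) (sj : Bool)
    (hs : sj = a ij) {t t' : ℕ}
    (h : varPath (m := m) a i t = clPath j ij sj t') :
    t = 0 ∧ t' = (j:ℕ) + 2 := by
  unfold varPath clPath at h
  split_ifs at h <;>
    first
    | exact PhiV.noConfusion h
    | exact ⟨by omega, by omega⟩
    | (rw [PhiV.mid.injEq] at h
       obtain ⟨rfl, hb, -⟩ := h
       rw [hs] at hb
       simp at hb)

lemma cl_cl_meet (j j' : Fin m) (i i' : Fin n) (s s' : Bool) {t t' : ℕ}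
    (ht : t ≤ m + 2) (ht' : t' ≤ m + 2)
    (h : clPath j i s t = clPath j' i' s' t') :
    (j:ℕ) = (j':ℕ) ∨ t + (j':ℕ) = t' + (j:ℕ) := by
  have hj := j.isLt; have hj' := j'.isLt
  unfold clPath at h
  split_ifs at h <;>
    first
    | exact PhiV.noConfusion h
    | omega
    | (left; rw [PhiV.vc.injEq] at h; exact congrArg Fin.val h)
    | (rw [PhiV.mid.injEq] at h
       obtain ⟨-, -, hk⟩ := h
       rw [Fin.mk.injEq] at hk
       right; omega)
    | (rw [PhiV.vcg.injEq, Fin.mk.injEq] at h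
       right; omega)

lemma clPath_stab (j : Fin m) (i : Fin n) (s : Bool) (t : ℕ) :
    clPath j i s t = clPath j i s (min t (m+2)) := by
  rcases le_or_gt t (m+2) with h | h
  · rw [min_eq_left h]
  · rw [min_eq_right h.le, clPath_end j i s h.le, clPath_end j i s le_rfl]

lemma varPath_feasible (sat : ThreeSat n m) (a : Fin n → Bool) (i : Fin n) :
    FeasiblePath (phiGraph sat) (.vx i) (.vxg i) (varPath a i) ∧
      arrivalTime (.vxg i) (varPath (m := m) a i) = m + 2 := by
  have hset : {t | varPath (m := m) a i t = .vxg i} = Set.Ici (m+2) := by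
    ext t
    simpa using varPath_eq_vxg a i t
  have harr : arrivalTime (.vxg i) (varPath (m := m) a i) = m + 2 := by
    rw [arrivalTime, hset, csInf_Ici]
  refine ⟨⟨varPath_zero a i, ⟨m+2, varPath_end a i le_rfl⟩, ?_, ?_⟩, harr⟩
  · intro t ht; rw [harr] at ht; exact varPath_end a i ht
  · intro t
    rcases Nat.eq_zero_or_pos t with rfl | h1
    · left
      rw [varPath_zero]
      obtain ⟨k, hk, e⟩ := varPath_mid (m := m) a i (le_refl 1) (by omega)
      rw [e]
      exact adj_vx_mid sat i _ k (by omega)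
    rcases le_or_gt (t+1) (m+1) with h2 | h2
    · left
      obtain ⟨k, hk, e⟩ := varPath_mid (m := m) a i (t := t) h1 (by omega)
      obtain ⟨k', hk', e'⟩ := varPath_mid (m := m) a i (t := t+1) (by omega) h2
      rw [e, e']
      exact adj_mid_mid sat i _ k k' (by omega)
    rcases le_or_gt t (m+1) with h3 | h3
    · left
      obtain ⟨k, hk, e⟩ := varPath_mid (m := m) a i (t := t) h1 h3
      rw [e, varPath_end a i (by omega)]
      exact adj_mid_vxg sat i _ k (by omega)
    · right
      rw [varPath_end a i (by omega), varPath_end a i (by omega)]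

lemma clPath_feasible (hm : 0 < m) (sat : ThreeSat n m) (j : Fin m)
    (i : Fin n) (s : Bool) (hl : ∃ l, sat.lit j l = (i, s)) :
    FeasiblePath (phiGraph sat) (.vc j) (.vcg j) (clPath j i s) ∧
      arrivalTime (.vcg j) (clPath j i s) = m + 2 := by
  have hjm := j.isLt
  have hset : {t | clPath j i s t = .vcg j} = Set.Ici (m+2) := by
    ext t
    simpa using clPath_eq_vcg j i s t
  have harr : arrivalTime (.vcg j) (clPath j i s) = m + 2 := by
    rw [arrivalTime, hset, csInf_Ici]
  refine ⟨⟨clPath_zero j i s, ⟨m+2, clPath_end j i s le_rfl⟩, ?_, ?_⟩, harr⟩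
  · intro t ht; rw [harr] at ht; exact clPath_end j i s ht
  · intro t
    rcases Nat.eq_zero_or_pos t with rfl | h1
    · left
      rw [clPath_zero]
      obtain ⟨k, hk, e⟩ := clPath_mid j i s (le_refl 1) (by omega)
      rw [e]
      exact adj_vc_mid sat j i s k hl (by omega)
    rcases le_or_gt (t+1) ((j:ℕ)+1) with h2 | h2
    · left
      obtain ⟨k, hk, e⟩ := clPath_mid j i s (t := t) h1 (by omega)
      obtain ⟨k', hk', e'⟩ := clPath_mid j i s (t := t+1) (by omega) h2
      rw [e, e']
      exact (adj_mid_mid sat i s k' k (by omega)).symm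
    rcases le_or_gt t ((j:ℕ)+1) with h3 | h3
    · left
      obtain ⟨k, hk, e⟩ := clPath_mid j i s (t := t) h1 h3
      have e2 : t + 1 = (j:ℕ) + 2 := by omega
      rw [e, e2, clPath_vx]
      exact (adj_vx_mid sat i s k (by omega)).symm
    rcases eq_or_ne t ((j:ℕ)+2) with rfl | h4
    · left
      obtain ⟨jj, hjj, e⟩ := clPath_vcg j i s (t := (j:ℕ)+3) (by omega) (by omega)
      have e2 : (j:ℕ) + 2 + 1 = (j:ℕ) + 3 := by omega
      rw [clPath_vx, e2, e]
      exact (adj_vcg_vx sat jj i (by omega)).symm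
    rcases le_or_gt (t+1) (m+2) with h5 | h5
    · left
      obtain ⟨jj, hjj, e⟩ := clPath_vcg j i s (t := t) (by omega) (by omega)
      obtain ⟨jj', hjj', e'⟩ := clPath_vcg j i s (t := t+1) (by omega) h5
      rw [e, e']
      exact (adj_vcg_vcg sat jj' jj (by omega)).symm
    · right
      rw [clPath_end j i s (by omega), clPath_end j i s (by omega)]

lemma forward_dir (hm : 0 < m) (sat : ThreeSat n m) (hs : sat.Satisfiable) :
    ∃ p : Fin n ⊕ Fin m → ℕ → PhiV n m,
      IsSolution (phiGraph sat) phiStart phiGoal p ∧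
        makespan phiGoal p ≤ m + 2 := by
  classical
  obtain ⟨a, ha⟩ := hs
  choose c hc using ha
  set I : Fin m → Fin n := fun j => (sat.lit j (c j)).1 with hI
  set S : Fin m → Bool := fun j => (sat.lit j (c j)).2 with hS
  have hlit : ∀ j, ∃ l, sat.lit j l = (I j, S j) := fun j => ⟨c j, rfl⟩
  have hSa : ∀ j, S j = a (I j) := fun j => (hc j).symm
  refine ⟨Sum.elim (fun i => varPath a i) (fun j => clPath j (I j) (S j)),
    ⟨?_, ?_⟩, ?_⟩
  · intro r
    cases r with
    | inl i => exact (varPath_feasible sat a i).1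
    | inr j => exact (clPath_feasible hm sat j (I j) (S j) (hlit j)).1
  · -- pairwise non-collision
    have key_lr : ∀ (i : Fin n) (j : Fin m),
        ¬ Collide (varPath (m := m) a i) (clPath j (I j) (S j)) := by
      intro i j hcol
      rcases hcol with ⟨t, h⟩ | ⟨t, h1, h2, -⟩
      · obtain ⟨e1, e2⟩ := var_cl_meet a i (I j) j (S j) (hSa j) h
        omega
      · obtain ⟨e1, e2⟩ := var_cl_meet a i (I j) j (S j) (hSa j) h2
        omega
    intro r r' hne
    cases r with
    | inl i => cases r' with
      | inl i' =>
          have hii : i ≠ i' := fun h => hne (congrArg Sum.inl h)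
          rintro (⟨t, h⟩ | ⟨t, h1, -, -⟩)
          · exact var_var_ne a hii t t h
          · exact var_var_ne a hii t (t+1) h1
      | inr j => exact key_lr i j
    | inr j => cases r' with
      | inl i => exact fun h => key_lr i j (collide_symm h)
      | inr j' =>
          have hjj : (j:ℕ) ≠ (j':ℕ) :=
            fun h => hne (congrArg Sum.inr (Fin.ext h))
          rintro (⟨t, h⟩ | ⟨t, h1, h2, -⟩) <;>
            simp only [Sum.elim_inr] at *
          · rw [clPath_stab j (I j) (S j) t, clPath_stab j' (I j') (S j') t] at h
            rcases cl_cl_meet j j' (I j) (I j') (S j) (S j')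
              (min_le_right _ _) (min_le_right _ _) h with h' | h'
            · exact hjj h'
            · omega
          · rw [clPath_stab j (I j) (S j) t,
              clPath_stab j' (I j') (S j') (t+1)] at h1
            rw [clPath_stab j (I j) (S j) (t+1),
              clPath_stab j' (I j') (S j') t] at h2
            rcases cl_cl_meet j j' (I j) (I j') (S j) (S j')
              (min_le_right _ _) (min_le_right _ _) h1 with h' | h' <;>
            rcases cl_cl_meet j j' (I j) (I j') (S j) (S j')
              (min_le_right _ _) (min_le_right _ _) h2 with h'' | h'' <;>
            first
              | exact hjj h'
              | exact hjj h''
              | omega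
  · -- makespan
    rw [makespan]
    apply Finset.sup_le
    intro r _
    cases r with
    | inl i => exact le_of_eq (varPath_feasible sat a i).2
    | inr j => exact le_of_eq (clPath_feasible hm sat j (I j) (S j) (hlit j)).2

end Aux5
end MPPFormal
namespace MPPFormal

/-- The reduced MPP instance `Φ` admits a solution with makespan at most
`m + 2` if and only if the 3SAT instance is satisfiable. -/
theorem makespan_iff_satisfiable {n m : ℕ} (hm : 0 < m) (sat : ThreeSat n m) :
    (∃ p : Fin n ⊕ Fin m → ℕ → PhiV n m,
        IsSolution (phiGraph sat) phiStart phiGoal p ∧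
        makespan phiGoal p ≤ m + 2) ↔
      sat.Satisfiable := by
  constructor
  · rintro ⟨p, hsol, hmk⟩
    exact backward_dir hm sat p hsol hmk
  · exact forward_dir hm sat

end MPPFormal
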